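/- Suppose V_kᵀ·X^{(0)} ∈ ℝ^{k×k} has rank k and |λ_k| > |λ_{k+1}|. Then for every choice of weight matrices W^{(t)}, the iterates converge exponentially to the column space of V_k: there exists C > 0 such that ‖X^{(t)} − V_k·V_kᵀ·X^{(t)}‖_F ≤ C·(|λ_{k+1}|/|λ_k|)^t for all t ≥ 0. -/
import Mathlib


open Matrix

/-- Column batch-normalization of a vector: subtract the mean, then rescale to unit ℓ₂-norm. -/
noncomputable def bn {n : ℕ} (x : Fin n → ℝ) : Fin n → ℝ :=
  (Real.sqrt (∑ i, (x i - (∑ j, x j) / n) ^ 2))⁻¹ • fun i => x i - (∑ j, x j) / n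

/-- BatchNorm: apply `bn` to every column of `X`. -/
noncomputable def BN {n k : ℕ} (X : Matrix (Fin n) (Fin k) ℝ) : Matrix (Fin n) (Fin k) ℝ :=
  Matrix.of fun r j => bn (fun a => X a j) r

/-- `BN Z` factors as the centering projector applied to `Z`, times a diagonal rescaling. -/
lemma BN_factor {n k : ℕ} (Z : Matrix (Fin n) (Fin k) ℝ) :
    BN Z = (((1 : Matrix (Fin n) (Fin n) ℝ) - (n : ℝ)⁻¹ • Matrix.of fun _ _ => (1 : ℝ)) * Z) *
      Matrix.diagonal (fun j => (Real.sqrt (∑ i, (Z i j - (∑ r, Z r j) / n) ^ 2))⁻¹) := by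
  ext r j
  have hbn : BN Z r j
      = (Real.sqrt (∑ i, (Z i j - (∑ r, Z r j) / n) ^ 2))⁻¹ * (Z r j - (∑ r, Z r j) / n) := rfl
  have hJ : ((Matrix.of fun _ _ => (1:ℝ) : Matrix (Fin n) (Fin n) ℝ) * Z) r j = ∑ a, Z a j := by
    simp [Matrix.mul_apply]
  rw [hbn, Matrix.mul_diagonal, Matrix.sub_mul, Matrix.one_mul, Matrix.smul_mul,
    Matrix.sub_apply, Matrix.smul_apply, hJ, smul_eq_mul, div_eq_inv_mul]
  ring

/-- A batch-normalized non-constant vector has unit ℓ₂-norm (squared). -/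
lemma bn_norm {n : ℕ} (x : Fin n → ℝ) (h : ¬ ∃ c : ℝ, ∀ r, x r = c) :
    ∑ r, (bn x r) ^ 2 = 1 := by
  have hTnn : (0:ℝ) ≤ ∑ i, (x i - (∑ j, x j) / n) ^ 2 :=
    Finset.sum_nonneg fun _ _ => sq_nonneg _
  have hTne : (∑ i, (x i - (∑ j, x j) / n) ^ 2) ≠ 0 := by
    intro h0
    refine h ⟨(∑ j, x j) / n, fun r => ?_⟩
    have h1 := (Finset.sum_eq_zero_iff_of_nonneg
      (fun i _ => sq_nonneg (x i - (∑ j, x j) / n))).mp h0 r (Finset.mem_univ r)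
    have h2 : x r - (∑ j, x j) / n = 0 := by
      have := sq_eq_zero_iff.mp h1
      exact this
    linarith
  have key : ∀ r : Fin n,
      bn x r = (Real.sqrt (∑ i, (x i - (∑ j, x j) / n) ^ 2))⁻¹ * (x r - (∑ j, x j) / n) :=
    fun r => rfl
  calc ∑ r, (bn x r) ^ 2
      = ∑ r, ((Real.sqrt (∑ i, (x i - (∑ j, x j) / n) ^ 2))⁻¹) ^ 2
          * (x r - (∑ j, x j) / n) ^ 2 := by
        refine Finset.sum_congr rfl fun r _ => ?_
        rw [key r, mul_pow]
    _ = ((Real.sqrt (∑ i, (x i - (∑ j, x j) / n) ^ 2))⁻¹) ^ 2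
          * ∑ r, (x r - (∑ j, x j) / n) ^ 2 := (Finset.mul_sum _ _ _).symm
    _ = 1 := by
        rw [inv_pow, Real.sq_sqrt hTnn, inv_mul_cancel₀ hTne]

set_option maxHeartbeats 1600000 in
/-- For the linearized GNN with BatchNorm
`X^{(t+1)} = BN(A·X^{(t)}·W^{(t)})`: if `V_kᵀ·X^{(0)}` has rank `k` and `|λ_k| > |λ_{k+1}|`,
then for every choice of weights the iterates converge exponentially to the column space of
`V_k`: there is `C > 0` with `‖X^{(t)} − V_k·V_kᵀ·X^{(t)}‖_F ≤ C·(|λ_{k+1}|/|λ_k|)^t`. -/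
theorem stmt_10 {n k : ℕ} (hk : 0 < k) (hkn : k < n)
    (A : Matrix (Fin n) (Fin n) ℝ) (hA : A.IsSymm)
    (X0 : Matrix (Fin n) (Fin k) ℝ)
    (hX0unit : ∀ j, Real.sqrt (∑ r, (X0 r j) ^ 2) = 1)
    -- an orthonormal eigenbasis of the centered operator `M = (I − 11ᵀ/n)·A`,
    -- ordered by decreasing absolute eigenvalue
    (lam : Fin n → ℝ) (ν : Fin n → Fin n → ℝ)
    (heig : ∀ i,
      (((1 : Matrix (Fin n) (Fin n) ℝ) - (n : ℝ)⁻¹ • Matrix.of fun _ _ => (1 : ℝ)) * A) *ᵥ ν i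
        = lam i • ν i)
    (horth : ∀ i j, ν i ⬝ᵥ ν j = if i = j then (1 : ℝ) else 0)
    (hord : ∀ i j : Fin n, i ≤ j → |lam j| ≤ |lam i|)
    -- `V_k`: the top-`k` eigenvectors as columns
    (Vk : Matrix (Fin n) (Fin k) ℝ)
    (hVk : Vk = Matrix.of fun r j => ν (Fin.castLE hkn.le j) r)
    (hrank : Matrix.rank (Vkᵀ * X0) = k)
    (hgap : |lam ⟨k, hkn⟩| < |lam ⟨k - 1, by omega⟩|) :
    ∀ (W : ℕ → Matrix (Fin k) (Fin k) ℝ) (X : ℕ → Matrix (Fin n) (Fin k) ℝ),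
      X 0 = X0 →
      (∀ t, X (t + 1) = BN (A * X t * W t)) →
      -- every update is well-defined: no column of `A·X^{(t)}·W^{(t)}` is constant
      (∀ t (j : Fin k), ¬ ∃ c : ℝ, ∀ r, (A * X t * W t) r j = c) →
      ∃ C > 0, ∀ t,
        Real.sqrt (∑ r, ∑ j, ((X t - Vk * Vkᵀ * X t) r j) ^ 2)
          ≤ C * (|lam ⟨k, hkn⟩| / |lam ⟨k - 1, by omega⟩|) ^ t := by
  intro W X hX0 hrec hwell
  have hk1n : k - 1 < n := by omega
  set P : Matrix (Fin n) (Fin n) ℝ :=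
    (1 : Matrix (Fin n) (Fin n) ℝ) - (n : ℝ)⁻¹ • Matrix.of fun _ _ => (1 : ℝ) with hP
  set M : Matrix (Fin n) (Fin n) ℝ := P * A with hMdef
  set Q : Matrix (Fin n) (Fin n) ℝ := Matrix.of (fun i r => ν i r) with hQdef
  -- orthogonality of Q
  have hQQt : Q * Qᵀ = 1 := by
    ext i j
    simpa [hQdef, Matrix.mul_apply, Matrix.transpose_apply, Matrix.one_apply,
      dotProduct] using horth i j
  have hQtQ : Qᵀ * Q = 1 := mul_eq_one_comm.mp hQQt
  have hQmv : ∀ (x : Fin n → ℝ) (i : Fin n), (Q *ᵥ x) i = ν i ⬝ᵥ x := by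
    intro x i
    simp [hQdef, Matrix.mulVec, dotProduct]
  -- Parseval
  have hpars : ∀ x : Fin n → ℝ, ∑ i, (ν i ⬝ᵥ x) ^ 2 = ∑ r, (x r) ^ 2 := by
    intro x
    have h2 : Q *ᵥ x = x ᵥ* Qᵀ := by rw [← Matrix.mulVec_transpose, Matrix.transpose_transpose]
    have h1 : (Q *ᵥ x) ⬝ᵥ (Q *ᵥ x) = x ⬝ᵥ x := by
      rw [Matrix.dotProduct_mulVec, h2, Matrix.vecMul_vecMul, hQtQ, Matrix.vecMul_one]
    calc ∑ i, (ν i ⬝ᵥ x) ^ 2 = ∑ i, (Q *ᵥ x) i * (Q *ᵥ x) i := by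
          simp only [sq, ← hQmv]
      _ = (Q *ᵥ x) ⬝ᵥ (Q *ᵥ x) := rfl
      _ = x ⬝ᵥ x := h1
      _ = ∑ r, (x r) ^ 2 := by simp [dotProduct, sq]
  -- M in eigencoordinates
  have hMQ : M * Qᵀ = Qᵀ * Matrix.diagonal lam := by
    ext r i
    calc (M * Qᵀ) r i = (M *ᵥ ν i) r := by
          simp only [Matrix.mul_apply, Matrix.mulVec, dotProduct,
            Matrix.transpose_apply, hQdef, Matrix.of_apply]
      _ = lam i * ν i r := by rw [heig i]; simp
      _ = (Qᵀ * Matrix.diagonal lam) r i := by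
          simp [hQdef, Matrix.mul_diagonal, Matrix.transpose_apply, mul_comm]
  have hM : M = Qᵀ * Matrix.diagonal lam * Q := by
    calc M = M * (Qᵀ * Q) := by rw [hQtQ, Matrix.mul_one]
      _ = (M * Qᵀ) * Q := (Matrix.mul_assoc M Qᵀ Q).symm
      _ = Qᵀ * Matrix.diagonal lam * Q := by rw [hMQ]
  have hMpow : ∀ t : ℕ, M ^ t = Qᵀ * Matrix.diagonal (fun i => lam i ^ t) * Q := by
    intro t
    induction t with
    | zero =>
      have hd : Matrix.diagonal (fun i : Fin n => lam i ^ 0) = 1 := by simp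
      rw [pow_zero, hd, Matrix.mul_one, hQtQ]
    | succ t ih =>
      have key : Q * (Qᵀ * (Matrix.diagonal lam * Q)) = Matrix.diagonal lam * Q := by
        rw [← Matrix.mul_assoc, hQQt, Matrix.one_mul]
      have hfun : (fun i => lam i ^ t * lam i) = fun i => lam i ^ (t + 1) := by
        funext i; rw [pow_succ]
      calc M ^ (t + 1)
          = (Qᵀ * Matrix.diagonal (fun i => lam i ^ t)) * (Q * (Qᵀ * (Matrix.diagonal lam * Q))) := by
            rw [pow_succ, ih, hM]; simp only [Matrix.mul_assoc]
        _ = (Qᵀ * Matrix.diagonal (fun i => lam i ^ t)) * (Matrix.diagonal lam * Q) := by rw [key]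
        _ = Qᵀ * ((Matrix.diagonal (fun i => lam i ^ t) * Matrix.diagonal lam) * Q) := by
            simp only [Matrix.mul_assoc]
        _ = Qᵀ * Matrix.diagonal (fun i => lam i ^ (t + 1)) * Q := by
            rw [Matrix.diagonal_mul_diagonal, hfun, ← Matrix.mul_assoc]
  -- coordinates of M^t action
  have hcoord : ∀ (t : ℕ) (u : Fin n → ℝ) (i : Fin n),
      ν i ⬝ᵥ ((M ^ t) *ᵥ u) = lam i ^ t * (ν i ⬝ᵥ u) := by
    intro t u i
    have hQM : Q * (Qᵀ * Matrix.diagonal (fun i => lam i ^ t) * Q)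
        = Matrix.diagonal (fun i => lam i ^ t) * Q := by
      rw [← Matrix.mul_assoc, ← Matrix.mul_assoc, hQQt, Matrix.one_mul]
    rw [← hQmv, ← hQmv, Matrix.mulVec_mulVec, hMpow, hQM, ← Matrix.mulVec_mulVec,
      Matrix.mulVec_diagonal]
  -- representation of the iterates
  have hrep : ∀ t, ∃ B : Matrix (Fin k) (Fin k) ℝ, X t = M ^ t * X0 * B := by
    intro t
    induction t with
    | zero => exact ⟨1, by rw [hX0, pow_zero, Matrix.one_mul, Matrix.mul_one]⟩
    | succ t ih =>
      obtain ⟨B, hB⟩ := ih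
      refine ⟨B * W t * Matrix.diagonal
        (fun j => (Real.sqrt (∑ i, ((A * X t * W t) i j - (∑ r, (A * X t * W t) r j) / n) ^ 2))⁻¹),
        ?_⟩
      rw [hrec t, BN_factor, ← hP]
      have h1 : P * (A * X t * W t) = M * X t * W t := by
        rw [hMdef]; simp only [Matrix.mul_assoc]
      rw [h1, hB, pow_succ']
      simp only [Matrix.mul_assoc]
  -- unit column norms
  have hunit : ∀ t (j : Fin k), ∑ r, (X t r j) ^ 2 = 1 := by
    intro t j
    cases t with
    | zero =>
      have hnn : (0:ℝ) ≤ ∑ r, (X0 r j) ^ 2 := Finset.sum_nonneg fun _ _ => sq_nonneg _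
      have h := Real.sq_sqrt hnn
      rw [hX0unit j, one_pow] at h
      rw [hX0]; exact h.symm
    | succ t =>
      rw [hrec t]
      exact bn_norm _ (hwell t j)
  -- invertibility of Vkᵀ * X0
  have hNunit : IsUnit (Vkᵀ * X0).det := by
    have h1 : LinearMap.range (Vkᵀ * X0).mulVecLin = ⊤ := by
      apply Submodule.eq_top_of_finrank_eq
      rw [show Module.finrank ℝ (LinearMap.range (Vkᵀ * X0).mulVecLin) = (Vkᵀ * X0).rank from rfl,
        hrank]
      simp
    have h2 : Function.Surjective (Vkᵀ * X0).mulVec := by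
      intro v
      have hv : v ∈ LinearMap.range (Vkᵀ * X0).mulVecLin := h1 ▸ Submodule.mem_top
      obtain ⟨w, hw⟩ := hv
      exact ⟨w, hw⟩
    exact (Matrix.isUnit_iff_isUnit_det _).mp (Matrix.mulVec_surjective_iff_isUnit.mp h2)
  have hNinv : (Vkᵀ * X0)⁻¹ * (Vkᵀ * X0) = 1 := Matrix.nonsing_inv_mul _ hNunit
  -- constants
  have hF2nn : (0:ℝ) ≤ ∑ r, ∑ j', (X0 r j') ^ 2 :=
    Finset.sum_nonneg fun _ _ => Finset.sum_nonneg fun _ _ => sq_nonneg _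
  have hK2nn : (0:ℝ) ≤ ∑ i : Fin k, ∑ j' : Fin k, ((Vkᵀ * X0)⁻¹ i j') ^ 2 :=
    Finset.sum_nonneg fun _ _ => Finset.sum_nonneg fun _ _ => sq_nonneg _
  have hlk1ne : lam ⟨k - 1, hk1n⟩ ≠ 0 := by
    intro h0
    have : |lam (⟨k - 1, hk1n⟩ : Fin n)| = 0 := by rw [h0, abs_zero]
    rw [this] at hgap
    exact absurd hgap (not_lt.mpr (abs_nonneg _))
  have hVkapp : ∀ (r : Fin n) (j' : Fin k), Vk r j' = ν (Fin.castLE hkn.le j') r := by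
    intro r j'; rw [hVk]; rfl
  -- per-column bound
  have hcol : ∀ (t : ℕ) (j : Fin k),
      ∑ r, ((X t - Vk * Vkᵀ * X t) r j) ^ 2
        ≤ (∑ r, ∑ j', (X0 r j') ^ 2) * (∑ i : Fin k, ∑ j' : Fin k, ((Vkᵀ * X0)⁻¹ i j') ^ 2)
          * ((lam ⟨k, hkn⟩ ^ 2 / lam ⟨k - 1, hk1n⟩ ^ 2) ^ t) := by
    intro t j
    obtain ⟨B, hB⟩ := hrep t
    set b : Fin k → ℝ := fun j' => B j' j with hb
    set u : Fin n → ℝ := X0 *ᵥ b with hu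
    have hx : (fun r => X t r j) = (M ^ t) *ᵥ u := by
      have h1 : (fun r => (M ^ t * X0 * B) r j) = (M ^ t * X0) *ᵥ b := by
        funext r
        simp [Matrix.mul_apply, Matrix.mulVec, dotProduct, hb]
      rw [hB, h1, hu]
      exact (Matrix.mulVec_mulVec _ _ _).symm
    have hxc : ∀ i, ν i ⬝ᵥ (fun r => X t r j) = lam i ^ t * (ν i ⬝ᵥ u) := by
      intro i; rw [hx]; exact hcoord t u i
    have hnorm1 : ∑ i, (lam i ^ t * (ν i ⬝ᵥ u)) ^ 2 = 1 := by
      have h := hpars (fun r => X t r j)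
      rw [hunit t j] at h
      rw [← h]
      exact Finset.sum_congr rfl fun i _ => by rw [hxc i]
    -- projection coordinates
    have hp : ∀ r, (Vk * Vkᵀ * X t) r j
        = ∑ j', ν (Fin.castLE hkn.le j') r * (ν (Fin.castLE hkn.le j') ⬝ᵥ (fun a => X t a j)) := by
      intro r
      rw [Matrix.mul_assoc, Matrix.mul_apply]
      refine Finset.sum_congr rfl fun j' _ => ?_
      rw [hVkapp]
      congr 1
      rw [Matrix.mul_apply]
      simp [Matrix.transpose_apply, dotProduct, hVkapp]
    have hproj : ∀ i : Fin n, ν i ⬝ᵥ (fun r => (X t - Vk * Vkᵀ * X t) r j)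
        = if (i : ℕ) < k then 0 else lam i ^ t * (ν i ⬝ᵥ u) := by
      intro i
      have hsplit : ν i ⬝ᵥ (fun r => (X t - Vk * Vkᵀ * X t) r j)
          = (ν i ⬝ᵥ fun r => X t r j) - ∑ r, ν i r * (Vk * Vkᵀ * X t) r j := by
        simp [dotProduct, Matrix.sub_apply, mul_sub, Finset.sum_sub_distrib]
      have h2 : ∑ r, ν i r * (Vk * Vkᵀ * X t) r j
          = ∑ j', (ν (Fin.castLE hkn.le j') ⬝ᵥ (fun a => X t a j))
              * (if i = Fin.castLE hkn.le j' then (1:ℝ) else 0) := by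
        calc ∑ r, ν i r * (Vk * Vkᵀ * X t) r j
            = ∑ r, ∑ j', ν i r * (ν (Fin.castLE hkn.le j') r
                * (ν (Fin.castLE hkn.le j') ⬝ᵥ (fun a => X t a j))) := by
              refine Finset.sum_congr rfl fun r _ => ?_
              rw [hp r, Finset.mul_sum]
          _ = ∑ j', ∑ r, ν i r * (ν (Fin.castLE hkn.le j') r
                * (ν (Fin.castLE hkn.le j') ⬝ᵥ (fun a => X t a j))) := Finset.sum_comm
          _ = ∑ j', (ν (Fin.castLE hkn.le j') ⬝ᵥ (fun a => X t a j))
                * (ν i ⬝ᵥ ν (Fin.castLE hkn.le j')) := by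
              refine Finset.sum_congr rfl fun j' _ => ?_
              simp only [dotProduct]
              rw [Finset.mul_sum]
              exact Finset.sum_congr rfl fun r _ => by ring
          _ = _ := by
              refine Finset.sum_congr rfl fun j' _ => ?_
              rw [horth]
      rw [hsplit, h2]
      by_cases hik : (i : ℕ) < k
      · have hie : i = Fin.castLE hkn.le ⟨(i : ℕ), hik⟩ := by ext; rfl
        have hsum : ∑ j', (ν (Fin.castLE hkn.le j') ⬝ᵥ (fun a => X t a j))
            * (if i = Fin.castLE hkn.le j' then (1:ℝ) else 0)
            = ν i ⬝ᵥ (fun a => X t a j) := by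
          rw [Finset.sum_eq_single (⟨(i : ℕ), hik⟩ : Fin k)]
          · rw [if_pos hie, mul_one, ← hie]
          · intro j' _ hne
            have : i ≠ Fin.castLE hkn.le j' := by
              intro h
              apply hne
              ext
              exact (congrArg Fin.val h).symm
            rw [if_neg this, mul_zero]
          · intro h; exact absurd (Finset.mem_univ _) h
        rw [hsum, if_pos hik, sub_self]
      · have hne : ∀ j' : Fin k, i ≠ Fin.castLE hkn.le j' := by
          intro j' h
          exact hik (h ▸ j'.isLt)
        have hsum : ∑ j', (ν (Fin.castLE hkn.le j') ⬝ᵥ (fun a => X t a j))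
            * (if i = Fin.castLE hkn.le j' then (1:ℝ) else 0) = 0 := by
          refine Finset.sum_eq_zero fun j' _ => ?_
          rw [if_neg (hne j'), mul_zero]
        rw [hsum, if_neg hik, sub_zero, hxc i]
    -- numerator
    have hsum : ∑ r, ((X t - Vk * Vkᵀ * X t) r j) ^ 2
        = ∑ i : Fin n, (if (i : ℕ) < k then 0 else lam i ^ t * (ν i ⬝ᵥ u)) ^ 2 := by
      calc ∑ r, ((X t - Vk * Vkᵀ * X t) r j) ^ 2
          = ∑ i, (ν i ⬝ᵥ (fun r => (X t - Vk * Vkᵀ * X t) r j)) ^ 2 := (hpars _).symm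
        _ = _ := Finset.sum_congr rfl fun i _ => by rw [hproj i]
    have hnum : ∑ i : Fin n, (if (i : ℕ) < k then 0 else lam i ^ t * (ν i ⬝ᵥ u)) ^ 2
        ≤ (lam ⟨k, hkn⟩ ^ 2) ^ t * ∑ i, (ν i ⬝ᵥ u) ^ 2 := by
      rw [Finset.mul_sum]
      refine Finset.sum_le_sum fun i _ => ?_
      by_cases hik : (i : ℕ) < k
      · rw [if_pos hik]
        have : ((0:ℝ)) ^ 2 = 0 := by norm_num
        rw [this]
        positivity
      · rw [if_neg hik]
        have habs : |lam i| ≤ |lam ⟨k, hkn⟩| := by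
          refine hord ⟨k, hkn⟩ i ?_
          rw [Fin.le_def]
          simpa using Nat.le_of_not_lt hik
        have h1 : lam i ^ 2 ≤ lam ⟨k, hkn⟩ ^ 2 := by
          rw [← sq_abs, ← sq_abs (lam ⟨k, hkn⟩)]
          exact pow_le_pow_left₀ (abs_nonneg _) habs 2
        calc (lam i ^ t * (ν i ⬝ᵥ u)) ^ 2 = (lam i ^ 2) ^ t * (ν i ⬝ᵥ u) ^ 2 := by ring
          _ ≤ (lam ⟨k, hkn⟩ ^ 2) ^ t * (ν i ⬝ᵥ u) ^ 2 :=
            mul_le_mul_of_nonneg_right (pow_le_pow_left₀ (sq_nonneg _) h1 t) (sq_nonneg _)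
    have halpha : ∑ i, (ν i ⬝ᵥ u) ^ 2 = ∑ r, (u r) ^ 2 := hpars u
    have huB : ∑ r, (u r) ^ 2 ≤ (∑ r, ∑ j', (X0 r j') ^ 2) * ∑ j', (b j') ^ 2 := by
      rw [Finset.sum_mul]
      refine Finset.sum_le_sum fun r _ => ?_
      have hur : u r = ∑ j', X0 r j' * b j' := by
        rw [hu]; simp [Matrix.mulVec, dotProduct]
      rw [hur]
      exact Finset.sum_mul_sq_le_sq_mul_sq _ _ _
    have hbB : ∑ j', (b j') ^ 2
        ≤ (∑ i : Fin k, ∑ j' : Fin k, ((Vkᵀ * X0)⁻¹ i j') ^ 2)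
          * ∑ j', (((Vkᵀ * X0) *ᵥ b) j') ^ 2 := by
      have hbeq : b = (Vkᵀ * X0)⁻¹ *ᵥ ((Vkᵀ * X0) *ᵥ b) := by
        rw [Matrix.mulVec_mulVec, hNinv, Matrix.one_mulVec]
      calc ∑ j', (b j') ^ 2
          = ∑ j', (((Vkᵀ * X0)⁻¹ *ᵥ ((Vkᵀ * X0) *ᵥ b)) j') ^ 2 := by rw [← hbeq]
        _ ≤ ∑ j' : Fin k, (∑ j2, ((Vkᵀ * X0)⁻¹ j' j2) ^ 2)
              * (∑ j2, (((Vkᵀ * X0) *ᵥ b) j2) ^ 2) := by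
            refine Finset.sum_le_sum fun j' _ => ?_
            have hh : ((Vkᵀ * X0)⁻¹ *ᵥ ((Vkᵀ * X0) *ᵥ b)) j'
                = ∑ j2, (Vkᵀ * X0)⁻¹ j' j2 * ((Vkᵀ * X0) *ᵥ b) j2 := rfl
            rw [hh]
            exact Finset.sum_mul_sq_le_sq_mul_sq _ _ _
        _ = _ := by rw [Finset.sum_mul]
    have hNb : ∀ j' : Fin k, ((Vkᵀ * X0) *ᵥ b) j' = ν (Fin.castLE hkn.le j') ⬝ᵥ u := by
      intro j'
      have h1 : (Vkᵀ * X0) *ᵥ b = Vkᵀ *ᵥ u := by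
        rw [hu, Matrix.mulVec_mulVec]
      rw [h1]
      simp [Matrix.mulVec, dotProduct, Matrix.transpose_apply, hVkapp]
    have hlow : (lam ⟨k - 1, hk1n⟩ ^ 2) ^ t * ∑ j', (((Vkᵀ * X0) *ᵥ b) j') ^ 2 ≤ 1 := by
      rw [← hnorm1, Finset.mul_sum]
      calc ∑ j', (lam ⟨k - 1, hk1n⟩ ^ 2) ^ t * (((Vkᵀ * X0) *ᵥ b) j') ^ 2
          ≤ ∑ j', (lam (Fin.castLE hkn.le j') ^ t * (ν (Fin.castLE hkn.le j') ⬝ᵥ u)) ^ 2 := by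
            refine Finset.sum_le_sum fun j' _ => ?_
            rw [hNb j']
            have habs : |lam ⟨k - 1, hk1n⟩| ≤ |lam (Fin.castLE hkn.le j')| := by
              refine hord (Fin.castLE hkn.le j') ⟨k - 1, hk1n⟩ ?_
              rw [Fin.le_def]
              have := j'.isLt
              simp only [Fin.coe_castLE]
              omega
            have h1 : lam ⟨k - 1, hk1n⟩ ^ 2 ≤ lam (Fin.castLE hkn.le j') ^ 2 := by
              rw [← sq_abs, ← sq_abs (lam (Fin.castLE hkn.le j'))]
              exact pow_le_pow_left₀ (abs_nonneg _) habs 2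
            calc (lam ⟨k - 1, hk1n⟩ ^ 2) ^ t * (ν (Fin.castLE hkn.le j') ⬝ᵥ u) ^ 2
                ≤ (lam (Fin.castLE hkn.le j') ^ 2) ^ t * (ν (Fin.castLE hkn.le j') ⬝ᵥ u) ^ 2 :=
                  mul_le_mul_of_nonneg_right (pow_le_pow_left₀ (sq_nonneg _) h1 t) (sq_nonneg _)
              _ = (lam (Fin.castLE hkn.le j') ^ t * (ν (Fin.castLE hkn.le j') ⬝ᵥ u)) ^ 2 := by
                  ring
        _ = ∑ i ∈ Finset.univ.image (Fin.castLE hkn.le),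
              (lam i ^ t * (ν i ⬝ᵥ u)) ^ 2 :=
            (Finset.sum_image (f := fun i => (lam i ^ t * (ν i ⬝ᵥ u)) ^ 2)
              (fun a _ c _ hac => Fin.castLE_injective hkn.le hac)).symm
        _ ≤ ∑ i, (lam i ^ t * (ν i ⬝ᵥ u)) ^ 2 :=
            Finset.sum_le_sum_of_subset_of_nonneg (Finset.subset_univ _)
              (fun i _ _ => sq_nonneg _)
    have hLpos : (0:ℝ) < (lam ⟨k - 1, hk1n⟩ ^ 2) ^ t := by positivity
    have hL : ∑ j', (((Vkᵀ * X0) *ᵥ b) j') ^ 2 ≤ ((lam ⟨k - 1, hk1n⟩ ^ 2) ^ t)⁻¹ := by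
      rw [← one_div]
      exact (le_div_iff₀' hLpos).mpr hlow
    have hLnn : (0:ℝ) ≤ ∑ j', (b j') ^ 2 := Finset.sum_nonneg fun _ _ => sq_nonneg _
    calc ∑ r, ((X t - Vk * Vkᵀ * X t) r j) ^ 2
        = ∑ i : Fin n, (if (i : ℕ) < k then 0 else lam i ^ t * (ν i ⬝ᵥ u)) ^ 2 := hsum
      _ ≤ (lam ⟨k, hkn⟩ ^ 2) ^ t * ∑ i, (ν i ⬝ᵥ u) ^ 2 := hnum
      _ = (lam ⟨k, hkn⟩ ^ 2) ^ t * ∑ r, (u r) ^ 2 := by rw [halpha]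
      _ ≤ (lam ⟨k, hkn⟩ ^ 2) ^ t * ((∑ r, ∑ j', (X0 r j') ^ 2) * ∑ j', (b j') ^ 2) :=
          mul_le_mul_of_nonneg_left huB (by positivity)
      _ ≤ (lam ⟨k, hkn⟩ ^ 2) ^ t * ((∑ r, ∑ j', (X0 r j') ^ 2)
            * ((∑ i : Fin k, ∑ j' : Fin k, ((Vkᵀ * X0)⁻¹ i j') ^ 2)
              * ∑ j', (((Vkᵀ * X0) *ᵥ b) j') ^ 2)) := by
          refine mul_le_mul_of_nonneg_left ?_ (by positivity)
          exact mul_le_mul_of_nonneg_left hbB hF2nn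
      _ ≤ (lam ⟨k, hkn⟩ ^ 2) ^ t * ((∑ r, ∑ j', (X0 r j') ^ 2)
            * ((∑ i : Fin k, ∑ j' : Fin k, ((Vkᵀ * X0)⁻¹ i j') ^ 2)
              * ((lam ⟨k - 1, hk1n⟩ ^ 2) ^ t)⁻¹)) := by
          refine mul_le_mul_of_nonneg_left ?_ (by positivity)
          refine mul_le_mul_of_nonneg_left ?_ hF2nn
          exact mul_le_mul_of_nonneg_left hL hK2nn
      _ = (∑ r, ∑ j', (X0 r j') ^ 2) * (∑ i : Fin k, ∑ j' : Fin k, ((Vkᵀ * X0)⁻¹ i j') ^ 2)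
            * ((lam ⟨k, hkn⟩ ^ 2 / lam ⟨k - 1, hk1n⟩ ^ 2) ^ t) := by
          rw [div_pow, div_eq_mul_inv]
          ring
  -- assemble the Frobenius bound
  refine ⟨Real.sqrt ((k : ℝ) * (∑ r, ∑ j', (X0 r j') ^ 2)
      * (∑ i : Fin k, ∑ j' : Fin k, ((Vkᵀ * X0)⁻¹ i j') ^ 2)) + 1, by positivity, fun t => ?_⟩
  have hratio : lam ⟨k, hkn⟩ ^ 2 / lam ⟨k - 1, hk1n⟩ ^ 2
      = (|lam ⟨k, hkn⟩| / |lam ⟨k - 1, hk1n⟩|) ^ 2 := by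
    rw [div_pow, sq_abs, sq_abs]
  have hrnn : (0:ℝ) ≤ (|lam ⟨k, hkn⟩| / |lam ⟨k - 1, hk1n⟩|) ^ t := by positivity
  have hsumall : ∑ r, ∑ j, ((X t - Vk * Vkᵀ * X t) r j) ^ 2
      ≤ (k : ℝ) * (∑ r, ∑ j', (X0 r j') ^ 2)
        * (∑ i : Fin k, ∑ j' : Fin k, ((Vkᵀ * X0)⁻¹ i j') ^ 2)
        * ((|lam ⟨k, hkn⟩| / |lam ⟨k - 1, hk1n⟩|) ^ t) ^ 2 := by
    rw [Finset.sum_comm]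
    calc ∑ j, ∑ r, ((X t - Vk * Vkᵀ * X t) r j) ^ 2
        ≤ ∑ _j : Fin k, (∑ r, ∑ j', (X0 r j') ^ 2)
            * (∑ i : Fin k, ∑ j' : Fin k, ((Vkᵀ * X0)⁻¹ i j') ^ 2)
            * ((lam ⟨k, hkn⟩ ^ 2 / lam ⟨k - 1, hk1n⟩ ^ 2) ^ t) :=
          Finset.sum_le_sum fun j _ => hcol t j
      _ = (k : ℝ) * ((∑ r, ∑ j', (X0 r j') ^ 2)
            * (∑ i : Fin k, ∑ j' : Fin k, ((Vkᵀ * X0)⁻¹ i j') ^ 2)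
            * ((lam ⟨k, hkn⟩ ^ 2 / lam ⟨k - 1, hk1n⟩ ^ 2) ^ t)) := by
          rw [Finset.sum_const, Finset.card_univ, Fintype.card_fin, nsmul_eq_mul]
      _ = _ := by
          rw [hratio, ← pow_mul, ← pow_mul, Nat.mul_comm]
          ring
  calc Real.sqrt (∑ r, ∑ j, ((X t - Vk * Vkᵀ * X t) r j) ^ 2)
      ≤ Real.sqrt ((k : ℝ) * (∑ r, ∑ j', (X0 r j') ^ 2)
          * (∑ i : Fin k, ∑ j' : Fin k, ((Vkᵀ * X0)⁻¹ i j') ^ 2)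
          * ((|lam ⟨k, hkn⟩| / |lam ⟨k - 1, hk1n⟩|) ^ t) ^ 2) := Real.sqrt_le_sqrt hsumall
    _ = Real.sqrt ((k : ℝ) * (∑ r, ∑ j', (X0 r j') ^ 2)
          * (∑ i : Fin k, ∑ j' : Fin k, ((Vkᵀ * X0)⁻¹ i j') ^ 2))
        * ((|lam ⟨k, hkn⟩| / |lam ⟨k - 1, hk1n⟩|) ^ t) := by
        rw [Real.sqrt_mul (by positivity), Real.sqrt_sq hrnn]
    _ ≤ (Real.sqrt ((k : ℝ) * (∑ r, ∑ j', (X0 r j') ^ 2)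
          * (∑ i : Fin k, ∑ j' : Fin k, ((Vkᵀ * X0)⁻¹ i j') ^ 2)) + 1)
        * ((|lam ⟨k, hkn⟩| / |lam ⟨k - 1, hk1n⟩|) ^ t) := by
        refine mul_le_mul_of_nonneg_right ?_ hrnn
        linarith
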